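/- For a right triangle with right angle at C, the BC-center and the CA-center of the bulging triangle coincide and both equal the midpoint M of the hypotenuse AB; consequently the union of the bulging arcs over BC and CA equals the semicircle with diameter AB containing C, and the whole bulging triangle is contained in the circle centered at M with radius |AM|. -/

import Mathlib

lemma dist2 (x y : EuclideanSpace ℝ (Fin 2)) :
    dist x y = Real.sqrt ((x 0 - y 0) ^ 2 + (x 1 - y 1) ^ 2) := by
  rw [EuclideanSpace.dist_eq, Fin.sum_univ_two]
  simp [Real.dist_eq, sq_abs]

set_option maxHeartbeats 2000000 in
theorem right_bulging_inscribed (a b : ℝ) (ha : 0 < a) (hb : 0 < b) (hab : a ≤ b) :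
    let A : EuclideanSpace ℝ (Fin 2) := !₂[a, b]
    let B : EuclideanSpace ℝ (Fin 2) := !₂[0, 0]
    let C : EuclideanSpace ℝ (Fin 2) := !₂[a, 0]
    let M : EuclideanSpace ℝ (Fin 2) := midpoint ℝ A B
    let P : EuclideanSpace ℝ (Fin 2) := !₂[a, (b ^ 2 - a ^ 2) / (2 * b)]
    -- M is both the BC-center and the CA-center: it lies on side AB and is
    -- equidistant from B and C, and from C and A.
    (M ∈ segment ℝ A B ∧ dist M B = dist M C ∧ dist M C = dist M A ∧
      dist M A = Real.sqrt (a ^ 2 + b ^ 2) / 2) ∧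
    -- the union of the bulging arcs over BC and over CA is the semicircle on the
    -- circle of diameter AB lying on the side of line AB containing C
    ({x : EuclideanSpace ℝ (Fin 2) | dist x M = dist A M ∧ x 1 ≤ 0} ∪
        {x : EuclideanSpace ℝ (Fin 2) | dist x M = dist A M ∧ a ≤ x 0} =
      {x : EuclideanSpace ℝ (Fin 2) | dist x M = dist A M ∧ 0 ≤ b * x 0 - a * x 1}) ∧
    -- the bulging arc over AB (the part of the circle centered at P through A and B
    -- on the far side of line AB from C) lies inside the circumscribed circle
    {x : EuclideanSpace ℝ (Fin 2) | dist x P = dist A P ∧ b * x 0 - a * x 1 ≤ 0} ⊆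
      Metric.closedBall M (dist A M) := by
  intro A B C M P
  have hM0 : M 0 = a / 2 := by simp [M, A, B, midpoint_eq_smul_add]; ring
  have hM1 : M 1 = b / 2 := by simp [M, A, B, midpoint_eq_smul_add]; ring
  have hA0 : A 0 = a := rfl
  have hA1 : A 1 = b := rfl
  have hrad : dist A M = Real.sqrt (a ^ 2 + b ^ 2) / 2 := by
    rw [dist2, hM0, hM1, hA0, hA1]
    rw [show (a - a / 2) ^ 2 + (b - b / 2) ^ 2 = (Real.sqrt (a ^ 2 + b ^ 2) / 2) ^ 2 by
      rw [div_pow, Real.sq_sqrt (by positivity)]; ring]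
    exact Real.sqrt_sq (by positivity)
  have hsq : Real.sqrt (a ^ 2 + b ^ 2) ^ 2 = a ^ 2 + b ^ 2 := Real.sq_sqrt (by positivity)
  -- circle membership in coordinates
  have hcirc : ∀ x : EuclideanSpace ℝ (Fin 2), dist x M = dist A M ↔
      x 0 ^ 2 + x 1 ^ 2 = a * x 0 + b * x 1 := by
    intro x
    rw [dist2, hrad, hM0, hM1]
    constructor
    · intro h
      have h2 := congrArg (· ^ 2) h
      simp only [Real.sq_sqrt (by positivity : (0:ℝ) ≤ (x 0 - a/2)^2 + (x 1 - b/2)^2),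
        div_pow, hsq] at h2
      nlinarith [h2]
    · intro h
      rw [show (x 0 - a / 2) ^ 2 + (x 1 - b / 2) ^ 2 = (a ^ 2 + b ^ 2) / 4 by nlinarith,
        show (a ^ 2 + b ^ 2) / 4 = (Real.sqrt (a ^ 2 + b ^ 2) / 2) ^ 2 by
          rw [div_pow, hsq]; ring]
      exact Real.sqrt_sq (by positivity)
  have hrad' : dist M A = Real.sqrt (a ^ 2 + b ^ 2) / 2 := (dist_comm M A).trans hrad
  refine ⟨⟨midpoint_mem_segment A B, ?_, ?_, hrad'⟩, ?_, ?_⟩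
  · rw [dist2, dist2, hM0, hM1]
    norm_num [B, C]
    ring_nf
  · rw [dist2, dist2, hM0, hM1, hA0, hA1]
    norm_num [C]
    ring_nf
  · ext x
    simp only [Set.mem_union, Set.mem_setOf_eq, hcirc x]
    constructor
    · rintro (⟨h, h1⟩ | ⟨h, h1⟩)
      · refine ⟨h, ?_⟩
        have hx0 : 0 ≤ x 0 := by nlinarith
        nlinarith
      · refine ⟨h, ?_⟩
        by_contra hc
        push_neg at hc
        have hx1 : b < x 1 := by nlinarith
        nlinarith
    · rintro ⟨h, h1⟩
      by_contra hc
      push_neg at hc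
      obtain ⟨hc1, hc2⟩ := hc
      have hx1 : 0 < x 1 := hc1 h
      have hx0a : x 0 < a := hc2 h
      have h3 : x 0 * (a - x 0) = x 1 * (x 1 - b) := by nlinarith
      have hx0 : 0 < x 0 := by nlinarith [mul_pos ha hx1]
      have hb1 : b < x 1 := by nlinarith [mul_pos hx0 (sub_pos.mpr hx0a)]
      have e1 : a * b < a * x 1 := mul_lt_mul_of_pos_left hb1 ha
      have e2 : x 0 * b < a * b := mul_lt_mul_of_pos_right hx0a hb
      nlinarith [e1, e2]
  · rintro x ⟨hx, hside⟩
    have hP0 : P 0 = a := rfl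
    have hP1 : P 1 = (b ^ 2 - a ^ 2) / (2 * b) := rfl
    rw [dist2 x P, dist2 A P, hA0, hA1, hP0, hP1] at hx
    have h2 := congrArg (· ^ 2) hx
    simp only [Real.sq_sqrt (by positivity :
      (0:ℝ) ≤ (x 0 - a)^2 + (x 1 - (b^2-a^2)/(2*b))^2), Real.sq_sqrt (by positivity :
      (0:ℝ) ≤ (a - a)^2 + (b - (b^2-a^2)/(2*b))^2)] at h2
    -- circle P equation gives x0²+x1² = 2a x0 + 2p x1
    have hb' : (2 * b) ≠ 0 := by positivity
    have hkey : x 0 ^ 2 + x 1 ^ 2 = 2 * a * x 0 + 2 * ((b ^ 2 - a ^ 2) / (2 * b)) * x 1 := by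
      field_simp at h2 ⊢
      nlinarith [h2]
    rw [Metric.mem_closedBall, dist2, hM0, hM1, hrad]
    rw [show Real.sqrt (a ^ 2 + b ^ 2) / 2 =
      Real.sqrt ((a ^ 2 + b ^ 2) / 4) by
        rw [show (a^2+b^2)/4 = (Real.sqrt (a^2+b^2)/2)^2 by rw [div_pow, hsq]; ring,
          Real.sqrt_sq (by positivity)]]
    apply Real.sqrt_le_sqrt
    have hgoal : x 0 ^ 2 + x 1 ^ 2 ≤ a * x 0 + b * x 1 := by
      rw [hkey]
      have key2 : a * x 0 - (a ^ 2 / b) * x 1 ≤ 0 := by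
        rw [show a * x 0 - (a ^ 2 / b) * x 1 = a / b * (b * x 0 - a * x 1) by
          field_simp]
        exact mul_nonpos_of_nonneg_of_nonpos (by positivity) hside
      have hq : 2 * ((b ^ 2 - a ^ 2) / (2 * b)) * x 1 = (b - a ^ 2 / b) * x 1 := by
        rw [show 2 * ((b ^ 2 - a ^ 2) / (2 * b)) = b - a ^ 2 / b by field_simp]
      rw [hq]
      nlinarith [key2]
    nlinarith
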